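/- Let 𝒳 be a topological space such that there exists a sequence (h_m)_{m≥1} of continuous functions h_m : 𝒳 → ℝ that separates points of 𝒳, and let 𝒮 denote the σ-algebra on 𝒳 generated by the maps (h_m)_{m≥1}. Then every probability measure μ on (𝒳, 𝒮) that is supported by a σ-compact set (i.e., there exists a σ-compact K ⊆ 𝒳 with K ∈ 𝒮 and μ(K) = 1) admits a unique extension to a measure on the Borel σ-algebra of 𝒳 that is a Radon measure (inner regular with respect to compact sets). -/

import Mathlib

open MeasureTheory

/-- Every probability measure on the σ-algebra generated by a separating sequence of
continuous real-valued functions that is supported by a σ-compact set has a unique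
Radon extension to the Borel σ-algebra. -/
theorem unique_radon_extension_of_separating
    {𝒳 : Type*} [TopologicalSpace 𝒳]
    (h : ℕ → 𝒳 → ℝ)
    (hcont : ∀ m, Continuous (h m))
    (hsep : ∀ x y : 𝒳, x ≠ y → ∃ m, h m x ≠ h m y)
    (𝒮 : MeasurableSpace 𝒳)
    (h𝒮 : 𝒮 = ⨆ m : ℕ, MeasurableSpace.comap (h m) (borel ℝ))
    (μ : @Measure 𝒳 𝒮) (hμ : @IsProbabilityMeasure 𝒳 𝒮 μ)
    (K : ℕ → Set 𝒳) (hK : ∀ n, IsCompact (K n))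
    (hKmeas : MeasurableSet[𝒮] (⋃ n, K n))
    (hKfull : μ (⋃ n, K n) = 1) :
    ∃! ν : @Measure 𝒳 (borel 𝒳),
      (∀ A : Set 𝒳, MeasurableSet[𝒮] A → ν A = μ A) ∧
      (∀ B : Set 𝒳, MeasurableSet[borel 𝒳] B →
        ν B = ⨆ (K' : Set 𝒳) (_ : IsCompact K' ∧ K' ⊆ B), ν K') := by
  classical
  letI : MeasurableSpace 𝒳 := borel 𝒳
  haveI : BorelSpace 𝒳 := ⟨rfl⟩
  set H : 𝒳 → (ℕ → ℝ) := fun x m => h m x with hHdef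
  have Hcont : Continuous H := continuous_pi hcont
  have Hinj : Function.Injective H := by
    intro x y hxy
    by_contra hne
    obtain ⟨m, hm⟩ := hsep x y hne
    exact hm (congrFun hxy m)
  haveI : T2Space 𝒳 := T2Space.of_injective_continuous Hinj Hcont
  have h𝒮' : 𝒮 = MeasurableSpace.comap H inferInstance := by
    rw [h𝒮,
      show (inferInstance : MeasurableSpace (ℕ → ℝ))
        = ⨆ m, MeasurableSpace.comap (fun y : ℕ → ℝ => y m) (borel ℝ) from rfl,
      MeasurableSpace.comap_iSup]
    exact iSup_congr fun m => by rw [MeasurableSpace.comap_comp]; rfl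
  have hle : 𝒮 ≤ (borel 𝒳) := by
    rw [h𝒮']
    exact measurable_iff_comap_le.mp Hcont.measurable
  have HmeasS : Measurable[𝒮] H := by rw [measurable_iff_comap_le, h𝒮']
  set Kset : Set 𝒳 := ⋃ n, K n with hKsetdef
  set μ' : Measure (ℕ → ℝ) := @Measure.map 𝒳 (ℕ → ℝ) 𝒮 _ H μ with hμ'def
  haveI : IsProbabilityMeasure μ' := @Measure.isProbabilityMeasure_map 𝒳 (ℕ → ℝ) 𝒮 _ μ hμ H (@Measurable.aemeasurable 𝒳 (ℕ → ℝ) 𝒮 _ H μ HmeasS)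
  have hmap : ∀ S : Set (ℕ → ℝ), MeasurableSet S → μ' S = μ (H ⁻¹' S) :=
    fun S hS => @Measure.map_apply 𝒳 (ℕ → ℝ) 𝒮 _ μ H HmeasS S hS
  have hTc : ∀ n, IsCompact (H '' K n) := fun n => (hK n).image Hcont
  set T : Set (ℕ → ℝ) := ⋃ n, H '' K n with hTdef
  have hTmeas : MeasurableSet T :=
    MeasurableSet.iUnion fun n => (hTc n).isClosed.measurableSet
  have hTeq : T = H '' Kset := by rw [hTdef, hKsetdef, Set.image_iUnion]
  have hHT : H ⁻¹' T = Kset := by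
    rw [hTeq]; exact Set.preimage_image_eq _ Hinj
  have hμ'T : μ' T = 1 := by rw [hmap T hTmeas, hHT]; exact hKfull
  have hμ'Tc : μ' Tᶜ = 0 := by
    have := measure_compl hTmeas (measure_ne_top μ' T)
    rw [hμ'T, measure_univ] at this
    simpa using this
  have hconull : ∀ S : Set (ℕ → ℝ), μ' (S ∩ T) = μ' S :=
    fun S => measure_inter_conull hμ'Tc
  have hKne : Kset.Nonempty := by
    rw [Set.nonempty_iff_ne_empty]
    intro hemp
    rw [hemp] at hKfull
    simp at hKfull
  obtain ⟨x₀, hx₀⟩ := hKne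
  set g : (ℕ → ℝ) → 𝒳 :=
    fun y => if hy : ∃ x, x ∈ Kset ∧ H x = y then hy.choose else x₀ with hgdef
  have hgH : ∀ x ∈ Kset, g (H x) = x := by
    intro x hx
    have hy : ∃ x', x' ∈ Kset ∧ H x' = H x := ⟨x, hx, rfl⟩
    rw [hgdef]
    simp only [dif_pos hy]
    exact Hinj hy.choose_spec.2
  have hnotT : ∀ y ∉ T, g y = x₀ := by
    intro y hy
    have hne : ¬ ∃ x, x ∈ Kset ∧ H x = y := by
      rintro ⟨x, hx, rfl⟩
      exact hy (hTeq ▸ Set.mem_image_of_mem H hx)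
    rw [hgdef]
    simp only [dif_neg hne]
  have hgT : ∀ y ∈ T, g y ∈ Kset ∧ H (g y) = y := by
    intro y hy
    obtain ⟨x, hx, rfl⟩ := hTeq ▸ hy
    rw [hgH x hx]
    exact ⟨hx, rfl⟩
  -- preimage formula
  have hpre : ∀ B : Set 𝒳,
      g ⁻¹' B = (H '' (B ∩ Kset)) ∪ (Tᶜ ∩ {y | x₀ ∈ B}) := by
    intro B
    ext y
    by_cases hy : y ∈ T
    · obtain ⟨x, hx, rfl⟩ := hTeq ▸ hy
      simp only [Set.mem_preimage, hgH x hx, Set.mem_union, Set.mem_inter_iff,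
        Set.mem_compl_iff, Set.mem_setOf_eq]
      constructor
      · intro hxB; exact Or.inl ⟨x, ⟨hxB, hx⟩, rfl⟩
      · rintro (⟨x', ⟨hx'B, _⟩, hxx'⟩ | ⟨hnT, _⟩)
        · exact (Hinj hxx') ▸ hx'B
        · exact absurd hy hnT
    · simp only [Set.mem_preimage, hnotT y hy, Set.mem_union, Set.mem_inter_iff,
        Set.mem_compl_iff, Set.mem_setOf_eq]
      constructor
      · intro hx; exact Or.inr ⟨hy, hx⟩
      · rintro (⟨x, ⟨_, hxK⟩, rfl⟩ | ⟨_, hx⟩)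
        · exact absurd (hTeq ▸ Set.mem_image_of_mem H hxK) hy
        · exact hx
  -- measurability of images
  have himgn : ∀ (B : Set 𝒳), MeasurableSet B → ∀ n, MeasurableSet (H '' (B ∩ K n)) := by
    intro B hB n
    haveI : CompactSpace (K n) := isCompact_iff_compactSpace.mp (hK n)
    have hemb : Topology.IsClosedEmbedding (fun x : K n => H x) :=
      (Hcont.comp continuous_subtype_val).isClosedEmbedding
        (Hinj.comp Subtype.val_injective)
    have himg : H '' (B ∩ K n) = (fun x : K n => H x) '' (Subtype.val ⁻¹' B) := by
      rw [show (fun x : K n => H x) = H ∘ (Subtype.val : K n → 𝒳) from rfl,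
        Set.image_comp, Subtype.image_preimage_coe, Set.inter_comm]
    rw [himg]
    exact hemb.measurableEmbedding.measurableSet_image' (measurable_subtype_coe hB)
  have himgK : ∀ (B : Set 𝒳), MeasurableSet B → MeasurableSet (H '' (B ∩ Kset)) := by
    intro B hB
    have : B ∩ Kset = ⋃ n, B ∩ K n := by rw [hKsetdef, Set.inter_iUnion]
    rw [this, Set.image_iUnion]
    exact MeasurableSet.iUnion fun n => himgn B hB n
  have hgmeas : Measurable g := by
    intro B hB
    rw [hpre B]
    refine (himgK B hB).union ?_
    by_cases hx : x₀ ∈ B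
    · simpa [hx] using hTmeas.compl
    · simp [hx]
  set ν : Measure 𝒳 := μ'.map g with hνdef
  have hνapp : ∀ B : Set 𝒳, MeasurableSet B → ν B = μ' (g ⁻¹' B) :=
    fun B hB => Measure.map_apply hgmeas hB
  -- condition 1
  have hcond1 : ∀ A : Set 𝒳, MeasurableSet[𝒮] A → ν A = μ A := by
    intro A hA
    have hA' := hA
    rw [h𝒮', MeasurableSpace.measurableSet_comap] at hA'
    obtain ⟨S, hS, rfl⟩ := hA'
    have hAS : MeasurableSet (H ⁻¹' S) := hle _ hA
    have h1 : g ⁻¹' (H ⁻¹' S) ∩ T = S ∩ T := by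
      ext y
      simp only [Set.mem_inter_iff, Set.mem_preimage]
      constructor
      · rintro ⟨hgy, hyT⟩; rw [(hgT y hyT).2] at hgy; exact ⟨hgy, hyT⟩
      · rintro ⟨hyS, hyT⟩; exact ⟨by rw [(hgT y hyT).2]; exact hyS, hyT⟩
    calc ν (H ⁻¹' S) = μ' (g ⁻¹' (H ⁻¹' S)) := hνapp _ hAS
      _ = μ' (g ⁻¹' (H ⁻¹' S) ∩ T) := (hconull _).symm
      _ = μ' (S ∩ T) := by rw [h1]
      _ = μ' S := hconull _
      _ = μ (H ⁻¹' S) := hmap S hS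
  -- compact sets are 𝒮-measurable
  have hcompS : ∀ C : Set 𝒳, IsCompact C → MeasurableSet[𝒮] C := by
    intro C hC
    rw [h𝒮', MeasurableSpace.measurableSet_comap]
    exact ⟨H '' C, (hC.image Hcont).isClosed.measurableSet,
      Set.preimage_image_eq C Hinj⟩
  -- continuity of g on pieces
  have hgcont : ∀ i, ContinuousOn g (H '' K i) := by
    intro i
    haveI : CompactSpace (K i) := isCompact_iff_compactSpace.mp (hK i)
    have hemb : Topology.IsClosedEmbedding (fun x : K i => H x) :=
      (Hcont.comp continuous_subtype_val).isClosedEmbedding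
        (Hinj.comp Subtype.val_injective)
    rw [Set.image_eq_range, continuousOn_iff_continuous_restrict]
    set φ := Topology.IsEmbedding.toHomeomorph hemb.isEmbedding with hφdef
    have hrestr : (Set.range fun x : K i => H x).domRestrict g
        = Subtype.val ∘ ⇑φ.symm := by
      funext z
      have h1 : H ((φ.symm z : K i) : 𝒳) = (z : ℕ → ℝ) :=
        congrArg Subtype.val (φ.apply_symm_apply z)
      have hmem : ((φ.symm z : K i) : 𝒳) ∈ Kset :=
        Set.mem_iUnion.mpr ⟨i, (φ.symm z : K i).2⟩
      show g (z : ℕ → ℝ) = ((φ.symm z : K i) : 𝒳)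
      rw [← h1, hgH _ hmem]
    rw [hrestr]
    exact continuous_subtype_val.comp φ.symm.continuous
  -- σ-compact exhaustion of T
  set T' : ℕ → Set (ℕ → ℝ) := fun n => ⋃ i ≤ n, H '' K i with hT'def
  have hT'cpt : ∀ n, IsCompact (T' n) :=
    fun n => (Set.finite_Iic n).isCompact_biUnion fun i _ => hTc i
  have hT'mono : Monotone T' := by
    intro a b hab
    exact Set.biUnion_subset_biUnion_left fun i hi => le_trans hi hab
  have hT'union : ⋃ n, T' n = T := by
    rw [hTdef]
    ext y
    simp only [hT'def, Set.mem_iUnion, exists_prop]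
    constructor
    · rintro ⟨n, i, _, hy⟩; exact ⟨i, hy⟩
    · rintro ⟨i, hy⟩; exact ⟨i, i, le_rfl, hy⟩
  -- condition 2
  have hcond2 : ∀ B : Set 𝒳, MeasurableSet[borel 𝒳] B →
      ν B = ⨆ (K' : Set 𝒳) (_ : IsCompact K' ∧ K' ⊆ B), ν K' := by
    intro B hB
    refine le_antisymm ?_ (iSup₂_le fun K' hK' => measure_mono hK'.2)
    refine le_of_forall_lt fun r hr => ?_
    have hA : MeasurableSet (g ⁻¹' B) := hgmeas hB
    have hr' : r < μ' (g ⁻¹' B ∩ T) := by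
      rwa [hνapp B hB, ← hconull (g ⁻¹' B)] at hr
    have hdecomp : g ⁻¹' B ∩ T = ⋃ n, g ⁻¹' B ∩ T' n := by
      rw [← hT'union, Set.inter_iUnion]
    rw [hdecomp, Directed.measure_iUnion
      (Monotone.directed_le fun a b hab =>
        Set.inter_subset_inter_right _ (hT'mono hab))] at hr'
    obtain ⟨n, hn⟩ := lt_iSup_iff.mp hr'
    obtain ⟨C, hCsub, hCclosed, hCr⟩ :=
      MeasurableSet.exists_lt_isClosed_of_ne_top
        (hA.inter (hT'cpt n).isClosed.measurableSet) (measure_ne_top _ _) hn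
    have hCT' : C ⊆ T' n := hCsub.trans Set.inter_subset_right
    have hCcpt : IsCompact C := (hT'cpt n).of_isClosed_subset hCclosed hCT'
    have hCdecomp : C = ⋃ i ≤ n, C ∩ H '' K i := by
      ext y
      simp only [Set.mem_iUnion, Set.mem_inter_iff, exists_prop]
      constructor
      · intro hy
        obtain ⟨i, hi, hmem⟩ : ∃ i, i ≤ n ∧ y ∈ H '' K i := by
          simpa only [hT'def, Set.mem_iUnion, exists_prop] using hCT' hy
        exact ⟨i, hi, hy, hmem⟩
      · rintro ⟨i, _, hy, _⟩; exact hy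
    have hK'cpt : IsCompact (g '' C) := by
      rw [hCdecomp, Set.image_iUnion₂]
      exact (Set.finite_Iic n).isCompact_biUnion fun i _ =>
        ((hTc i).inter_left hCclosed).image_of_continuousOn
          ((hgcont i).mono Set.inter_subset_right)
    have hK'sub : g '' C ⊆ B := by
      rintro _ ⟨y, hy, rfl⟩
      exact (hCsub hy).1
    refine lt_of_lt_of_le (lt_of_lt_of_le hCr ?_)
      (le_iSup₂ (f := fun (K' : Set 𝒳) (_ : IsCompact K' ∧ K' ⊆ B) => ν K')
        (g '' C) ⟨hK'cpt, hK'sub⟩)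
    rw [hνapp _ hK'cpt.isClosed.measurableSet]
    exact measure_mono (Set.subset_preimage_image g C)
  refine ⟨ν, ⟨hcond1, hcond2⟩, ?_⟩
  rintro ν₂ ⟨hc1, hc2⟩
  refine Measure.ext fun s hs => ?_
  rw [hc2 s hs, hcond2 s hs]
  refine iSup_congr fun K' => iSup_congr fun hK' => ?_
  rw [hc1 K' (hcompS K' hK'.1), hcond1 K' (hcompS K' hK'.1)]
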